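/- Let L/M be a field extension that is not purely inseparable of finite exponent, with L infinite. Then there does not exist a nonconstant rational function φ ∈ L(x) (coefficients allowed in the larger field L) such that φ(d) ∈ M for all but finitely many d ∈ L. -/

import Mathlib

open Polynomial

section AuxiliaryLemmas

variable {L : Type*} [Field L]

lemma myaux_coeff_X_sub_C_mul (M : Subfield L) {t0 : L} (ht0 : t0 ∈ M) {A : L[X]}
    (hA : ∀ i, A.coeff i ∈ M) (i : ℕ) : ((X - C t0) * A).coeff i ∈ M := by
  rw [sub_mul]
  rcases i with _ | i
  · rw [coeff_sub, mul_coeff_zero, coeff_X_zero, zero_mul, coeff_C_mul]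
    exact M.sub_mem (M.zero_mem) (M.mul_mem ht0 (hA 0))
  · rw [coeff_sub, coeff_X_mul, coeff_C_mul]
    exact M.sub_mem (hA i) (M.mul_mem ht0 (hA (i + 1)))

lemma myaux_descend (M : Subfield L) : ∀ (k : ℕ) (N D : L[X]) (T : Set L),
    2 * (N.natDegree + D.natDegree) + (if D.natDegree ≤ N.natDegree then 0 else 1) ≤ k →
    D ≠ 0 → T.Infinite → (∀ t ∈ T, t ∈ M) →
    (∀ t ∈ T, D.eval t ≠ 0 ∧ ∃ c ∈ M, N.eval t = c * D.eval t) →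
    ∃ A B : L[X], (∀ i, A.coeff i ∈ M) ∧ (∀ i, B.coeff i ∈ M) ∧ B ≠ 0 ∧
      A.natDegree ≤ N.natDegree ∧ B.natDegree ≤ D.natDegree ∧ A * D = B * N := by
  intro k
  induction k using Nat.strong_induction_on with
  | _ k IH =>
    intro N D T hk hD hT hTM hval
    have hk2 : 2 * (N.natDegree + D.natDegree) ≤ k := le_trans (Nat.le_add_right _ _) hk
    by_cases hND : N.natDegree < D.natDegree
    · -- swap case
      by_cases hN0 : N = 0
      · refine ⟨0, 1, fun i => by simp [M.zero_mem], fun i => ?_, one_ne_zero, by simp,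
          by simp, by simp [hN0]⟩
        rw [coeff_one]
        split <;> simp [M.zero_mem, M.one_mem]
      · have hT' : (T \ {x | N.IsRoot x}).Infinite := hT.diff (finite_setOf_isRoot hN0)
        have hval' : ∀ t ∈ T \ {x | N.IsRoot x}, N.eval t ≠ 0 ∧
            ∃ c ∈ M, D.eval t = c * N.eval t := by
          rintro t ⟨htT, htR⟩
          have hNt : N.eval t ≠ 0 := htR
          obtain ⟨hDt, c, hcM, hc⟩ := hval t htT
          have hc0 : c ≠ 0 := by
            rintro rfl; rw [zero_mul] at hc; exact hNt hc
          refine ⟨hNt, c⁻¹, M.inv_mem hcM, ?_⟩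
          field_simp [hc]
          rw [hc]; ring
        have hkless : 2 * (D.natDegree + N.natDegree) +
            (if N.natDegree ≤ D.natDegree then 0 else 1) < k := by
          have h1 : (if N.natDegree ≤ D.natDegree then 0 else 1) = 0 := by
            simp [le_of_lt hND]
          have h2 : (if D.natDegree ≤ N.natDegree then 0 else 1) = 1 := by
            simp [not_le.mpr hND]
          omega
        obtain ⟨A', B', hA', hB', hB'0, hdA', hdB', heq'⟩ :=
          IH _ hkless D N _ le_rfl hN0 hT' (fun t ht => hTM t ht.1) hval'
        have hA'0 : A' ≠ 0 := by
          rintro rfl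
          rw [zero_mul] at heq'
          exact mul_ne_zero hB'0 hD heq'.symm
        exact ⟨B', A', hB', hA', hA'0, hdB', hdA', heq'.symm⟩
    · push_neg at hND
      obtain ⟨t0, ht0T⟩ := hT.nonempty
      obtain ⟨hDt0, c0, hc0M, heq0⟩ := hval t0 ht0T
      by_cases hN' : N - C c0 * D = 0
      · refine ⟨C c0, 1, fun i => ?_, fun i => ?_, one_ne_zero, by simp, by simp, ?_⟩
        · rw [coeff_C]; split <;> simp [hc0M, M.zero_mem]
        · rw [coeff_one]; split <;> simp [M.zero_mem, M.one_mem]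
        · rw [one_mul]; exact (sub_eq_zero.mp hN').symm
      · have hroot : (N - C c0 * D).IsRoot t0 := by
          simp [IsRoot, heq0]
        set g := (N - C c0 * D) /ₘ (X - C t0) with hg
        have hquot : (X - C t0) * g = N - C c0 * D :=
          mul_divByMonic_eq_iff_isRoot.mpr hroot
        have hdn1 : 1 ≤ N.natDegree := by
          by_contra hdn
          push_neg at hdn
          interval_cases h : N.natDegree
          · have hdd : D.natDegree = 0 := le_antisymm (h ▸ hND) (Nat.zero_le _)
            have hNC := eq_C_of_natDegree_le_zero h.le
            have hDC := eq_C_of_natDegree_le_zero hdd.le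
            apply hN'
            rw [hNC, hDC, ← C_mul, ← C_sub, C_eq_zero]
            have : N.eval t0 = N.coeff 0 := by rw [hNC]; simp
            have hD0' : D.eval t0 = D.coeff 0 := by rw [hDC]; simp
            rw [this, hD0'] at heq0
            rw [heq0]; ring
        have hdegN' : (N - C c0 * D).natDegree ≤ N.natDegree := by
          refine le_trans (natDegree_sub_le _ _) ?_
          simp only [max_le_iff]
          exact ⟨le_refl _, le_trans (natDegree_C_mul_le _ _) hND⟩
        have hdegg : g.natDegree ≤ N.natDegree - 1 := by
          rw [hg, natDegree_divByMonic _ (monic_X_sub_C t0), natDegree_X_sub_C]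
          omega
        have hT2 : (T \ {t0}).Infinite := hT.diff (Set.finite_singleton t0)
        have hval2 : ∀ t ∈ T \ {t0}, D.eval t ≠ 0 ∧ ∃ c ∈ M, g.eval t = c * D.eval t := by
          rintro t ⟨htT, htne⟩
          have htne : t ≠ t0 := htne
          obtain ⟨hDt, c, hcM, hc⟩ := hval t htT
          refine ⟨hDt, (c - c0) * (t - t0)⁻¹, M.mul_mem (M.sub_mem hcM hc0M)
            (M.inv_mem (M.sub_mem (hTM t htT) (hTM t0 ht0T))), ?_⟩
          have hev : (t - t0) * g.eval t = N.eval t - c0 * D.eval t := by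
            have := congrArg (Polynomial.eval t) hquot
            simpa using this
          have htt0 : t - t0 ≠ 0 := sub_ne_zero.mpr htne
          field_simp
          rw [mul_comm (g.eval t) (t - t0), hev, hc]
          ring
        have hkless : 2 * (g.natDegree + D.natDegree) +
            (if D.natDegree ≤ g.natDegree then 0 else 1) < k := by
          have h1 : (if D.natDegree ≤ g.natDegree then 0 else 1) ≤ 1 := by split <;> omega
          omega
        obtain ⟨A', B', hA', hB', hB'0, hdA', hdB', heq'⟩ :=
          IH _ hkless g D _ le_rfl hD hT2 (fun t ht => hTM t ht.1) hval2
        refine ⟨(X - C t0) * A' + C c0 * B', B', fun i => ?_, hB', hB'0, ?_, hdB', ?_⟩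
        · rw [coeff_add, coeff_C_mul]
          exact M.add_mem (myaux_coeff_X_sub_C_mul M (hTM t0 ht0T) hA' i)
            (M.mul_mem hc0M (hB' i))
        · refine le_trans (natDegree_add_le _ _) ?_
          have h1 : ((X - C t0) * A').natDegree ≤ 1 + A'.natDegree := by
            refine le_trans (natDegree_mul_le) ?_
            rw [natDegree_X_sub_C]
          have h2 : (C c0 * B').natDegree ≤ B'.natDegree := natDegree_C_mul_le _ _
          have := hdA'
          simp only [max_le_iff]
          omega
        · have hN : (X - C t0) * g + C c0 * D = N := by rw [hquot]; ring
          calc ((X - C t0) * A' + C c0 * B') * D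
              = (X - C t0) * (A' * D) + C c0 * (B' * D) := by ring
            _ = (X - C t0) * (B' * g) + C c0 * (B' * D) := by rw [heq']
            _ = B' * ((X - C t0) * g + C c0 * D) := by ring
            _ = B' * N := by rw [hN]



lemma myaux_coeff_mem_of_eval_mem (M : Subfield L) (f : L[X]) (T : Set L) (hT : T.Infinite)
    (hTM : ∀ t ∈ T, t ∈ M) (hf : ∀ t ∈ T, f.eval t ∈ M) : ∀ i, f.coeff i ∈ M := by
  have hval : ∀ t ∈ T, (1 : L[X]).eval t ≠ 0 ∧ ∃ c ∈ M, f.eval t = c * (1 : L[X]).eval t := by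
    intro t ht
    exact ⟨by simp, f.eval t, hf t ht, by simp⟩
  obtain ⟨A, B, hA, hB, hB0, hdA, hdB, hEq⟩ := myaux_descend M
    (2 * (f.natDegree + (1 : L[X]).natDegree) + 1) f 1 T (by split <;> omega)
    one_ne_zero hT hTM hval
  have hdB : B.natDegree = 0 := le_antisymm (by simpa using hdB) (Nat.zero_le _)
  have hBC : B = C (B.coeff 0) := eq_C_of_natDegree_le_zero hdB.le
  have hb0 : B.coeff 0 ≠ 0 := by
    intro hb; apply hB0; rw [hBC, hb, map_zero]
  have hAf : A = C (B.coeff 0) * f := by rw [← hBC, ← hEq, mul_one]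
  intro i
  have : A.coeff i = B.coeff 0 * f.coeff i := by rw [hAf, coeff_C_mul]
  have hfc : f.coeff i = (B.coeff 0)⁻¹ * A.coeff i := by
    rw [this]; field_simp
  rw [hfc]
  exact M.mul_mem (M.inv_mem (hB 0)) (hA i)

lemma myaux_pow_mem (M : Subfield L) (hMinf : (M : Set L).Infinite)
    (R : L[X]) (hRdeg : 1 ≤ R.natDegree) (hRM : ∀ a : L, R.eval a ∈ M) :
    ∀ a : L, a ^ R.natDegree ∈ M := by
  set n := R.natDegree with hn
  have hcoeffs : ∀ a : L, R.coeff n * a ^ n ∈ M := by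
    intro a
    set f : L[X] := ∑ j ∈ Finset.range (n + 1), C (R.coeff j * a ^ j) * X ^ j with hf
    have hfeval : ∀ t : L, f.eval t = R.eval (a * t) := by
      intro t
      rw [hf, Polynomial.eval_finset_sum, Polynomial.eval_eq_sum_range (x := a * t)]
      apply Finset.sum_congr rfl
      intro j _
      simp [mul_pow]
      ring
    have hcoeff : f.coeff n = R.coeff n * a ^ n := by
      rw [hf, Polynomial.finset_sum_coeff,
        Finset.sum_eq_single n (fun j _ hj => by
          rw [coeff_C_mul, coeff_X_pow, if_neg (Ne.symm hj), mul_zero])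
          (fun hnotin => absurd (Finset.self_mem_range_succ n) hnotin),
        coeff_C_mul, coeff_X_pow, if_pos rfl, mul_one]
    have := myaux_coeff_mem_of_eval_mem M f (M : Set L) hMinf (fun t ht => ht)
      (fun t _ => by rw [hfeval]; exact hRM _) n
    rwa [hcoeff] at this
  have hR0 : R ≠ 0 := by
    intro h
    have h0 : R.natDegree = 0 := by rw [h]; simp
    omega
  have hrn0 : R.coeff n ≠ 0 := by
    rw [hn]; exact leadingCoeff_ne_zero.mpr hR0
  have hrnM : R.coeff n ∈ M := by simpa using hcoeffs 1
  intro a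
  have := hcoeffs a
  have : a ^ n = (R.coeff n)⁻¹ * (R.coeff n * a ^ n) := by field_simp
  rw [this]
  exact M.mul_mem (M.inv_mem hrnM) (hcoeffs a)

lemma myaux_final (M : Subfield L) (hMinf : (M : Set L).Infinite) (n : ℕ) (hn : 1 ≤ n)
    (hpow : ∀ a : L, a ^ n ∈ M) :
    (∀ a : L, a ∈ M) ∨ ∃ p e : ℕ, p.Prime ∧ CharP L p ∧ ∀ a : L, a ^ p ^ e ∈ M := by
  haveI := ringChar.charP L
  rcases CharP.char_is_prime_or_zero L (ringChar L) with hp | hp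
  · right
    set p := ringChar L with hpdef
    haveI : Fact p.Prime := ⟨hp⟩
    set e := n.factorization p with he
    set m := n / p ^ e with hm
    have hn0 : n ≠ 0 := by omega
    have hnm : p ^ e * m = n := Nat.ordProj_mul_ordCompl_eq_self n p
    have hpm : ¬ p ∣ m := Nat.not_dvd_ordCompl hp hn0
    have hm0 : m ≠ 0 := by
      rintro h; rw [h, mul_zero] at hnm; exact hn0 hnm.symm
    refine ⟨p, e, hp, inferInstance, fun a => ?_⟩
    -- T is the image of M under Frobenius^e
    have hinj : Function.Injective (fun t : L => t ^ p ^ e) := by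
      intro x y hxy
      have hsub : (x - y) ^ p ^ e = 0 := by
        rw [sub_pow_char_pow]
        simpa using sub_eq_zero.mpr hxy
      have := pow_eq_zero_iff (n := p ^ e) (Nat.pow_pos hp.pos : 0 < p ^ e).ne' |>.mp hsub
      exact sub_eq_zero.mp this
    have hTinf : ((fun t : L => t ^ p ^ e) '' (M : Set L)).Infinite :=
      hMinf.image (hinj.injOn)
    have hTM : ∀ s ∈ (fun t : L => t ^ p ^ e) '' (M : Set L), s ∈ M := by
      rintro s ⟨t, htM, rfl⟩
      exact M.pow_mem htM _
    set f : L[X] := (X + C (a ^ p ^ e)) ^ m with hf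
    have hfval : ∀ s ∈ (fun t : L => t ^ p ^ e) '' (M : Set L), f.eval s ∈ M := by
      rintro s ⟨t, htM, rfl⟩
      have : f.eval (t ^ p ^ e) = (t + a) ^ n := by
        rw [hf]
        simp only [eval_pow, eval_add, eval_X, eval_C]
        rw [← add_pow_char_pow, ← pow_mul, ← hnm]
      rw [this]
      exact hpow (t + a)
    have hco := myaux_coeff_mem_of_eval_mem M f _ hTinf hTM hfval (m - 1)
    rw [hf, coeff_X_add_C_pow] at hco
    have hm1 : 1 ≤ m := Nat.one_le_iff_ne_zero.mpr hm0
    have h1 : m - (m - 1) = 1 := Nat.sub_sub_self hm1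
    have h2 : m.choose (m - 1) = m := by
      calc m.choose (m - 1) = m.choose 1 := Nat.choose_symm hm1
        _ = m := Nat.choose_one_right m
    rw [h1, h2, pow_one] at hco
    have hmL : ((m : L)) ≠ 0 := by
      rw [Ne, CharP.cast_eq_zero_iff L p m]
      exact hpm
    have : a ^ p ^ e = (a ^ p ^ e * (m : L)) * ((m : L))⁻¹ := by field_simp
    rw [this]
    exact M.mul_mem hco (M.inv_mem (natCast_mem M m))
  · left
    haveI : CharP L 0 := hp ▸ ringChar.charP L
    haveI : CharZero L := CharP.charP_to_charZero L
    intro a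
    set f : L[X] := (X + C a) ^ n with hf
    have hfval : ∀ s ∈ (M : Set L), f.eval s ∈ M := by
      intro s _
      have : f.eval s = (s + a) ^ n := by simp [hf]
      rw [this]; exact hpow (s + a)
    have hco := myaux_coeff_mem_of_eval_mem M f _ hMinf (fun t ht => ht) hfval (n - 1)
    rw [hf, coeff_X_add_C_pow] at hco
    have h1 : n - (n - 1) = 1 := Nat.sub_sub_self hn
    have h2 : n.choose (n - 1) = n := by
      calc n.choose (n - 1) = n.choose 1 := Nat.choose_symm hn
        _ = n := Nat.choose_one_right n
    rw [h1, h2, pow_one] at hco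
    have hnL : ((n : L)) ≠ 0 := Nat.cast_ne_zero.mpr (by omega)
    have : a = (a * (n : L)) * ((n : L))⁻¹ := by field_simp
    rw [this]
    exact M.mul_mem hco (M.inv_mem (natCast_mem M n))
end AuxiliaryLemmas

/-- `L/M` is purely inseparable of finite exponent: either `L = M` (the trivial,
characteristic-zero, form), or `char L = p > 0` and there is `e` with `a^{p^e} ∈ M`
for all `a ∈ L`. -/
def PurelyInsepFinExp {L : Type*} [Field L] (M : Subfield L) : Prop :=
  (∀ a : L, a ∈ M) ∨
    ∃ p e : ℕ, p.Prime ∧ CharP L p ∧ ∀ a : L, a ^ p ^ e ∈ M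

theorem stmt15 {L : Type*} [Field L] [Infinite L] (M : Subfield L)
    (h : ¬ PurelyInsepFinExp M) :
    ¬ ∃ φ : RatFunc L, (¬ ∃ c : L, φ = RatFunc.C c) ∧
      {d : L | RatFunc.eval (RingHom.id L) d φ ∉ M}.Finite := by
  rintro ⟨φ, hφc, hE⟩
  set N := φ.num with hN
  set D := φ.denom with hD
  have hDm : D.Monic := φ.monic_denom
  have hD0 : D ≠ 0 := φ.denom_ne_zero
  have hcop : IsCoprime N D := φ.isCoprime_num_denom
  have heval : ∀ d : L, RatFunc.eval (RingHom.id L) d φ = N.eval d / D.eval d := fun d => rfl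
  have hCne : ∀ c : L, N ≠ C c * D := by
    intro c hc
    apply hφc
    refine ⟨c, ?_⟩
    rw [← φ.num_div_denom, ← hN, ← hD, hc, map_mul, RatFunc.algebraMap_C, mul_div_assoc,
      div_self (RatFunc.algebraMap_ne_zero hD0), mul_one]
  have hMinf : (M : Set L).Infinite := by
    by_contra hMfin
    rw [Set.not_infinite] at hMfin
    have hsub : (Set.univ : Set L) ⊆ {d | RatFunc.eval (RingHom.id L) d φ ∉ M} ∪
        ⋃ c ∈ (M : Set L), ({d | D.eval d = 0} ∪ {d | (N - C c * D).eval d = 0}) := by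
      intro d _
      by_cases hd : RatFunc.eval (RingHom.id L) d φ ∈ M
      · right
        refine Set.mem_biUnion hd ?_
        by_cases hDd : D.eval d = 0
        · exact Or.inl hDd
        · right
          show (N - C (RatFunc.eval (RingHom.id L) d φ) * D).eval d = 0
          rw [eval_sub, eval_mul, eval_C, heval]
          field_simp
          ring
      · exact Or.inl hd
    have hfin : ({d | RatFunc.eval (RingHom.id L) d φ ∉ M} ∪
        ⋃ c ∈ (M : Set L), ({d | D.eval d = 0} ∪ {d | (N - C c * D).eval d = 0})).Finite := by
      refine hE.union (hMfin.biUnion fun c _ => ?_)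
      refine (finite_setOf_isRoot hD0).union (finite_setOf_isRoot ?_)
      rw [sub_ne_zero]
      exact hCne c
    exact (Set.infinite_univ.mono hsub) hfin
  have key : ∀ a : L, (∀ i, (N.comp (X + C a)).coeff i ∈ M) ∧
      (∀ i, (D.comp (X + C a)).coeff i ∈ M) := by
    intro a
    set Na := N.comp (X + C a) with hNa
    set Da := D.comp (X + C a) with hDa
    have hDam : Da.Monic := hDm.comp_X_add_C a
    have hDa0 : Da ≠ 0 := hDam.ne_zero
    set T : Set L := (M : Set L) \ ((fun t => t + a) ⁻¹'
      ({d | RatFunc.eval (RingHom.id L) d φ ∉ M} ∪ {d | D.eval d = 0})) with hT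
    have hTinf : T.Infinite := hMinf.diff (Set.Finite.preimage
      ((add_left_injective a).injOn) (hE.union (finite_setOf_isRoot hD0)))
    have hTM : ∀ t ∈ T, t ∈ M := fun t ht => ht.1
    have hval : ∀ t ∈ T, Da.eval t ≠ 0 ∧ ∃ c ∈ M, Na.eval t = c * Da.eval t := by
      rintro t ⟨htM, htn⟩
      simp only [Set.mem_preimage, Set.mem_union, Set.mem_setOf_eq, not_or, not_not] at htn
      obtain ⟨hgood, hDne⟩ := htn
      have hNaev : Na.eval t = N.eval (t + a) := by rw [hNa, eval_comp]; simp
      have hDaev : Da.eval t = D.eval (t + a) := by rw [hDa, eval_comp]; simp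
      refine ⟨by rw [hDaev]; exact hDne, RatFunc.eval (RingHom.id L) (t + a) φ, hgood, ?_⟩
      rw [hNaev, hDaev, heval]
      field_simp
    obtain ⟨A, B, hA, hB, hB0, hdA, hdB, hEq⟩ := myaux_descend M
      (2 * (Na.natDegree + Da.natDegree) + 1) Na Da T (by split <;> omega) hDa0 hTinf hTM hval
    have hcopa : IsCoprime Na Da := hcop.map ((Polynomial.aeval (X + C a)).toRingHom)
    have hdvd : Da ∣ B := hcopa.symm.dvd_of_dvd_mul_right (hEq ▸ dvd_mul_left Da A)
    obtain ⟨q, hq⟩ := hdvd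
    have hq0 : q ≠ 0 := by
      rintro rfl; rw [mul_zero] at hq; exact hB0 hq
    have hqdeg : q.natDegree = 0 := by
      have := natDegree_mul hDa0 hq0
      rw [← hq] at this
      omega
    set cq := q.coeff 0 with hcq
    have hqC : q = C cq := eq_C_of_natDegree_le_zero hqdeg.le
    have hcq0 : cq ≠ 0 := by
      rintro hc; apply hq0; rw [hqC, hc, map_zero]
    have hlc : B.leadingCoeff = cq := by
      rw [hq, hqC, leadingCoeff_mul, hDam.leadingCoeff, one_mul, leadingCoeff_C]
    have hcqM : cq ∈ M := by
      rw [← hlc]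
      exact hB B.natDegree
    have hDacoeff : ∀ i, Da.coeff i ∈ M := by
      intro i
      have : B.coeff i = Da.coeff i * cq := by rw [hq, hqC, coeff_mul_C]
      have h2 : Da.coeff i = B.coeff i * cq⁻¹ := by rw [this]; field_simp
      rw [h2]
      exact M.mul_mem (hB i) (M.inv_mem hcqM)
    have hAeq : A = C cq * Na := by
      have h1 : Da * A = Da * (C cq * Na) := by
        calc Da * A = A * Da := by ring
          _ = B * Na := hEq
          _ = Da * C cq * Na := by rw [hq, hqC]
          _ = Da * (C cq * Na) := by ring
      exact mul_left_cancel₀ hDa0 h1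
    have hNacoeff : ∀ i, Na.coeff i ∈ M := by
      intro i
      have : A.coeff i = cq * Na.coeff i := by rw [hAeq, coeff_C_mul]
      have h2 : Na.coeff i = cq⁻¹ * A.coeff i := by rw [this]; field_simp
      rw [h2]
      exact M.mul_mem (M.inv_mem hcqM) (hA i)
    exact ⟨hNacoeff, hDacoeff⟩
  have hRex : ∃ R : L[X], 1 ≤ R.natDegree ∧ ∀ a : L, R.eval a ∈ M := by
    have hevalmem : ∀ (P : L[X]), (∀ a i, (P.comp (X + C a)).coeff i ∈ M) →
        ∀ a : L, P.eval a ∈ M := by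
      intro P hP a
      have := hP a 0
      rwa [coeff_zero_eq_eval_zero, eval_comp, eval_add, eval_X, eval_C, zero_add] at this
    by_cases hDdeg : 1 ≤ D.natDegree
    · exact ⟨D, hDdeg, hevalmem D (fun a => (key a).2)⟩
    · refine ⟨N, ?_, hevalmem N (fun a => (key a).1)⟩
      by_contra hNdeg
      push_neg at hNdeg
      have hD1 : D = 1 := by
        have hDc : D = C (D.coeff 0) := eq_C_of_natDegree_le_zero (by omega)
        have : D.coeff 0 = 1 := by
          have := hDm.leadingCoeff
          rwa [leadingCoeff, (by omega : D.natDegree = 0)] at this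
        rw [hDc, this, map_one]
      apply hCne (N.coeff 0)
      rw [hD1, mul_one]
      exact eq_C_of_natDegree_le_zero (by omega)
  obtain ⟨R, hRdeg, hRM⟩ := hRex
  have hpow := myaux_pow_mem M hMinf R hRdeg hRM
  exact h (myaux_final M hMinf R.natDegree hRdeg hpow)
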